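/- Disappearance of the fundamental solution at the critical exponent: let N ≥ 3, m_c = (N-2)/N, and fix M > 0 and t > 0. For each m ∈ (m_c, 1) let B_m denote the fast diffusion Barenblatt solution whose constant C = C(m) > 0 is chosen so that ∫_{ℝ^N} B_m(x,t) dx = M. Then, as m → m_c from above: (a) for every x ≠ 0, B_m(x,t) → 0; and (b) for every bounded continuous function f : ℝ^N → ℝ, ∫_{ℝ^N} f(x) B_m(x,t) dx → M·f(0); that is, the measures B_m(·,t) dx converge weakly-* to the Dirac mass M·δ₀. -/

import Mathlib

open MeasureTheory Real Filter Topology Set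

noncomputable section

/-- Self-similarity exponent `α = N/(2-N(1-m))` of the fast diffusion Barenblatt solution. -/
def fdeAlpha (N : ℕ) (m : ℝ) : ℝ := N / (2 - N * (1 - m))

/-- Self-similarity exponent `β = 1/(2-N(1-m))` of the fast diffusion Barenblatt solution. -/
def fdeBeta (N : ℕ) (m : ℝ) : ℝ := 1 / (2 - N * (1 - m))

/-- The constant `k = β(1-m)/(2m)`. -/
def fdeK (N : ℕ) (m : ℝ) : ℝ := fdeBeta N m * (1 - m) / (2 * m)

/-- The Barenblatt solution `B(x,t) = t^{-α} (C + k|x|² t^{-2β})^{-1/(1-m)}`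
of the fast diffusion equation `∂_t u = Δ(u^m)`. -/
def fdeBarenblatt (N : ℕ) (m C : ℝ) (x : EuclideanSpace ℝ (Fin N)) (t : ℝ) : ℝ :=
  t ^ (-fdeAlpha N m) *
    (C + fdeK N m * ‖x‖ ^ 2 * t ^ (-(2 * fdeBeta N m))) ^ (-(1 / (1 - m)))

section helpers

open Module

variable {N : ℕ} {mc m : ℝ}

lemma fde_N3 (hN : 3 ≤ N) : (3:ℝ) ≤ N := by exact_mod_cast hN

lemma fde_mc_pos (hN : 3 ≤ N) (hmc : mc = ((N:ℝ)-2)/N) : 0 < mc := by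
  have := fde_N3 hN
  rw [hmc]; exact div_pos (by linarith) (by linarith)

lemma fde_mc_lt_one (hN : 3 ≤ N) (hmc : mc = ((N:ℝ)-2)/N) : mc < 1 := by
  have := fde_N3 hN
  rw [hmc, div_lt_one (by linarith)]; linarith

lemma fde_d_eq (hN : 3 ≤ N) (hmc : mc = ((N:ℝ)-2)/N) :
    2 - (N:ℝ)*(1-m) = N*(m-mc) := by
  have h := fde_N3 hN
  have hN0 : (N:ℝ) ≠ 0 := by linarith
  rw [hmc]; field_simp; ring

lemma fde_d_pos (hN : 3 ≤ N) (hmc : mc = ((N:ℝ)-2)/N) (hm₁ : mc < m) :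
    0 < 2 - (N:ℝ)*(1-m) := by
  have h := fde_N3 hN
  rw [fde_d_eq hN hmc]
  have : 0 < m - mc := by linarith
  positivity

lemma fdeK_pos (hN : 3 ≤ N) (hmc : mc = ((N:ℝ)-2)/N) (hm₁ : mc < m) (hm₂ : m < 1) :
    0 < fdeK N m := by
  have hd := fde_d_pos hN hmc hm₁
  have hm0 : 0 < m := lt_trans (fde_mc_pos hN hmc) hm₁
  have hb : 0 < fdeBeta N m := by unfold fdeBeta; positivity
  unfold fdeK
  have h1m : 0 < 1 - m := by linarith
  positivity

lemma fde_t_div_K {t : ℝ} (hN : 3 ≤ N) (hmc : mc = ((N:ℝ)-2)/N) (hm₁ : mc < m) (hm₂ : m < 1) :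
    t / fdeK N m = (2*m*(N:ℝ)*t/(1-m)) * (m - mc) := by
  have h := fde_N3 hN
  have hd := fde_d_pos hN hmc hm₁
  have hde := fde_d_eq (m := m) hN hmc
  have hm0 : 0 < m := lt_trans (fde_mc_pos hN hmc) hm₁
  have h1m : 0 < 1 - m := by linarith
  have hs : 0 < m - mc := by linarith
  unfold fdeK fdeBeta
  rw [hde]
  field_simp

lemma fde_rpow_aux {T K X a b p : ℝ} (hT : 0 < T) (hK : 0 < K) (hX : 0 < X)
    (hexp : -a + (-(2*b))*(-p) = p) :
    T^(-a) * (K * X * T^(-(2*b)))^(-p) = (T/K)^p * X^(-p) := by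
  calc T^(-a) * (K * X * T^(-(2*b)))^(-p)
      = T^(-a) * (K^(-p) * X^(-p) * (T^(-(2*b)))^(-p)) := by
        rw [Real.mul_rpow (mul_pos hK hX).le (rpow_pos_of_pos hT _).le,
          Real.mul_rpow hK.le hX.le]
    _ = (T^(-a) * T^(-(2*b) * -p)) * K^(-p) * X^(-p) := by
        rw [← Real.rpow_mul hT.le]; ring
    _ = T^p * K^(-p) * X^(-p) := by rw [← Real.rpow_add hT, hexp]
    _ = (T/K)^p * X^(-p) := by
        rw [Real.div_rpow hT.le hK.le, Real.rpow_neg hK.le, div_eq_mul_inv]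

lemma fde_pointwise_bound {Cc t : ℝ} (hN : 3 ≤ N)
    (hmc : mc = ((N:ℝ)-2)/N) (hm₁ : mc < m) (hm₂ : m < 1) (hC : 0 < Cc) (ht : 0 < t)
    {x : EuclideanSpace ℝ (Fin N)} (hx : x ≠ 0) :
    fdeBarenblatt N m Cc x t ≤
      (t / fdeK N m) ^ (1/(1-m)) * (‖x‖^2) ^ (-(1/(1-m))) := by
  have hd := fde_d_pos hN hmc hm₁
  have hk := fdeK_pos hN hmc hm₁ hm₂
  have h1m : 0 < 1 - m := by linarith
  have hxp : (0:ℝ) < ‖x‖^2 := by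
    have : 0 < ‖x‖ := norm_pos_iff.mpr hx
    positivity
  have htb : 0 < t ^ (-(2*fdeBeta N m)) := rpow_pos_of_pos ht _
  have hq : 0 < fdeK N m * ‖x‖^2 * t ^ (-(2*fdeBeta N m)) := by positivity
  have hta : 0 ≤ t ^ (-fdeAlpha N m) := (rpow_pos_of_pos ht _).le
  have step1 : fdeBarenblatt N m Cc x t ≤
      t ^ (-fdeAlpha N m) * (fdeK N m * ‖x‖^2 * t ^ (-(2*fdeBeta N m))) ^ (-(1/(1-m))) := by
    unfold fdeBarenblatt
    refine mul_le_mul_of_nonneg_left ?_ hta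
    refine Real.rpow_le_rpow_of_nonpos hq (by linarith) ?_
    have : 0 ≤ 1/(1-m) := by positivity
    linarith
  refine step1.trans_eq ?_
  refine fde_rpow_aux ht hk hxp ?_
  unfold fdeAlpha fdeBeta
  have hd' : (2 - (N:ℝ)*(1-m)) ≠ 0 := ne_of_gt hd
  have h1m' : (1-m) ≠ 0 := ne_of_gt h1m
  field_simp
  ring

lemma fde_nonneg {Cc t : ℝ} (hN : 3 ≤ N)
    (hmc : mc = ((N:ℝ)-2)/N) (hm₁ : mc < m) (hm₂ : m < 1) (hC : 0 ≤ Cc) (ht : 0 < t)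
    (x : EuclideanSpace ℝ (Fin N)) :
    0 ≤ fdeBarenblatt N m Cc x t := by
  have hk := fdeK_pos hN hmc hm₁ hm₂
  unfold fdeBarenblatt
  apply mul_nonneg (Real.rpow_nonneg ht.le _)
  apply Real.rpow_nonneg
  have h : 0 ≤ fdeK N m * ‖x‖^2 * t ^ (-(2*fdeBeta N m)) := by positivity
  linarith

lemma fde_integrable {m Cc t M : ℝ} (hM : 0 < M)
    (h : ∫ x : EuclideanSpace ℝ (Fin N), fdeBarenblatt N m Cc x t = M) :
    Integrable (fun x : EuclideanSpace ℝ (Fin N) => fdeBarenblatt N m Cc x t) := by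
  by_contra hc
  rw [integral_undef hc] at h
  linarith

lemma fde_tail_integrableOn (hN : 3 ≤ N) {δ P : ℝ} (hδ : 0 < δ) (hP : (N:ℝ) < 2*P) :
    IntegrableOn (fun x : EuclideanSpace ℝ (Fin N) => ‖x‖ ^ (-(2*P)))
      {x : EuclideanSpace ℝ (Fin N) | δ ≤ ‖x‖} := by
  have hfr : (finrank ℝ (EuclideanSpace ℝ (Fin N)) : ℝ) < 2*P := by
    rwa [finrank_euclideanSpace_fin]
  have hint : Integrable (fun x : EuclideanSpace ℝ (Fin N) => (1 + ‖x‖) ^ (-(2*P))) :=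
    integrable_one_add_norm hfr
  have hP0 : 0 < 2*P := lt_of_le_of_lt (by positivity) hP
  refine Integrable.mono' ((hint.const_mul ((1 + δ⁻¹) ^ (2*P))).restrict) ?_ ?_
  · apply Measurable.aestronglyMeasurable
    fun_prop
  · filter_upwards [ae_restrict_mem (by
      exact isClosed_le continuous_const continuous_norm |>.measurableSet)] with x hx
    have hxδ : δ ≤ ‖x‖ := hx
    have hx0 : 0 < ‖x‖ := lt_of_lt_of_le hδ hxδ
    have h1 : 1 + ‖x‖ ≤ (1 + δ⁻¹) * ‖x‖ := by
      have : 1 ≤ δ⁻¹ * ‖x‖ := by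
        have := (inv_pos.mpr hδ).le
        calc (1:ℝ) = δ⁻¹ * δ := by field_simp
        _ ≤ δ⁻¹ * ‖x‖ := by nlinarith
      nlinarith
    rw [Real.norm_eq_abs, abs_of_nonneg (Real.rpow_nonneg hx0.le _)]
    have h2 : ((1 + δ⁻¹) * ‖x‖) ^ (-(2*P)) ≤ (1 + ‖x‖) ^ (-(2*P)) := by
      apply Real.rpow_le_rpow_of_nonpos (by positivity) h1 (by linarith)
    rw [Real.mul_rpow (by positivity) hx0.le] at h2
    have h3 : (1 + δ⁻¹) ^ (2*P) * ((1 + δ⁻¹) ^ (-(2*P)) * ‖x‖ ^ (-(2*P)))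
        ≤ (1 + δ⁻¹) ^ (2*P) * (1 + ‖x‖) ^ (-(2*P)) :=
      mul_le_mul_of_nonneg_left h2 (Real.rpow_nonneg (by positivity) _)
    rw [← mul_assoc, ← Real.rpow_add (by positivity), add_neg_cancel, Real.rpow_zero,
      one_mul] at h3
    linarith [h3]

lemma fde_tail_integral_eq (hN : 3 ≤ N) {δ P : ℝ} (hδ : 0 < δ) (hP : (N:ℝ) < 2*P) :
    ∫ x : EuclideanSpace ℝ (Fin N) in {x | δ ≤ ‖x‖}, ‖x‖ ^ (-(2*P)) =
      ((N : ℝ) * (volume (Metric.ball (0:EuclideanSpace ℝ (Fin N)) 1)).toReal) *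
        (δ ^ ((N:ℝ) - 2*P) / (2*P - N)) := by
  haveI : Nonempty (Fin N) := ⟨⟨0, by omega⟩⟩
  set E := EuclideanSpace ℝ (Fin N)
  have hS : MeasurableSet {x : E | δ ≤ ‖x‖} :=
    (isClosed_le continuous_const continuous_norm).measurableSet
  set F : ℝ → ℝ := (Ici δ).indicator (fun r => r ^ (-(2*P))) with hF
  have stepA : ∫ x : E in {x | δ ≤ ‖x‖}, ‖x‖ ^ (-(2*P)) = ∫ x : E, F ‖x‖ := by
    rw [← integral_indicator hS]
    refine integral_congr_ae (Eventually.of_forall fun x => ?_)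
    by_cases h : δ ≤ ‖x‖ <;>
      simp [hF, Set.indicator, h]
  rw [stepA, integral_fun_norm_addHaar (volume : Measure E) F]
  have hdim : finrank ℝ E = N := finrank_euclideanSpace_fin
  rw [hdim]
  have stepC : ∫ y in Ioi (0:ℝ), y ^ (N - 1) • F y
      = ∫ y in Ioi δ, y ^ ((N:ℝ) - 1 + -(2*P)) := by
    have h1 : ∀ y ∈ Ioi (0:ℝ), y ^ (N-1) • F y
        = (Ici δ).indicator (fun r => r ^ ((N:ℝ) - 1 + -(2*P))) y := by
      intro y hy
      have hy0 : (0:ℝ) < y := hy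
      by_cases h : y ∈ Ici δ
      · have hyd : δ ≤ y := h
        simp only [hF, Set.indicator_of_mem h, smul_eq_mul]
        rw [Real.rpow_add hy0, ← Real.rpow_natCast y (N-1)]
        congr 2
        push_cast [Nat.cast_sub (by omega : 1 ≤ N)]
        ring
      · simp [hF, Set.indicator_of_notMem h]
    have hsub : Ici δ ⊆ Ioi (0:ℝ) := fun y hy => lt_of_lt_of_le hδ hy
    rw [setIntegral_congr_fun measurableSet_Ioi h1,
      setIntegral_indicator measurableSet_Ici,
      inter_eq_self_of_subset_right hsub,
      integral_Ici_eq_integral_Ioi]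
  rw [stepC, integral_Ioi_rpow_of_lt (by linarith) hδ]
  rw [show (N:ℝ) - 1 + -(2*P) + 1 = (N:ℝ) - 2*P by ring]
  rw [nsmul_eq_mul, smul_eq_mul]
  have h2 : (2:ℝ)*P - N ≠ 0 := by linarith
  have h3 : (N:ℝ) - 2*P ≠ 0 := by linarith
  field_simp
  simp only [measureReal_def]; ring

lemma fde_ev_lt_one (hN : 3 ≤ N) (hmc : mc = ((N:ℝ)-2)/N) :
    ∀ᶠ m in 𝓝[>] mc, mc < m ∧ m < 1 := by
  have h1 : ∀ᶠ m in 𝓝[>] mc, m < 1 :=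
    eventually_nhdsWithin_of_eventually_nhds (eventually_lt_nhds (fde_mc_lt_one hN hmc))
  filter_upwards [h1, self_mem_nhdsWithin] with m h1 h2 using ⟨h2, h1⟩

lemma fde_id_tendsto : Tendsto (fun m : ℝ => m) (𝓝[>] mc) (𝓝 mc) :=
  tendsto_id.mono_left nhdsWithin_le_nhds

lemma fde_one_sub_ne (hN : 3 ≤ N) (hmc : mc = ((N:ℝ)-2)/N) : (1:ℝ) - mc ≠ 0 :=
  ne_of_gt (by linarith [fde_mc_lt_one hN hmc])

lemma fde_p_tendsto (hN : 3 ≤ N) (hmc : mc = ((N:ℝ)-2)/N) :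
    Tendsto (fun m : ℝ => 1/(1-m)) (𝓝[>] mc) (𝓝 ((N:ℝ)/2)) := by
  have h := ((tendsto_const_nhds (x := (1:ℝ))).sub fde_id_tendsto).inv₀
    (fde_one_sub_ne hN hmc)
  have heq : ((1:ℝ) - mc)⁻¹ = (N:ℝ)/2 := by
    have h3 := fde_N3 hN
    have hN0 : (N:ℝ) ≠ 0 := by linarith
    rw [hmc]
    rw [show (1:ℝ) - ((N:ℝ)-2)/N = 2/N by field_simp; ring]
    rw [inv_div]
  rw [heq] at h
  simpa [one_div] using h

lemma fde_s_tendsto : Tendsto (fun m : ℝ => m - mc) (𝓝[>] mc) (𝓝[>] 0) := by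
  rw [tendsto_nhdsWithin_iff]
  constructor
  · have h : Tendsto (fun m : ℝ => m - mc) (𝓝[>] mc) (𝓝 (mc - mc)) :=
      fde_id_tendsto.sub tendsto_const_nhds
    simpa using h
  · filter_upwards [self_mem_nhdsWithin] with m hm
    simpa using sub_pos.mpr (mem_Ioi.mp hm)

lemma fde_c_tendsto {t : ℝ} (hN : 3 ≤ N) (hmc : mc = ((N:ℝ)-2)/N) :
    Tendsto (fun m : ℝ => 2*m*(N:ℝ)*t/(1-m)) (𝓝[>] mc) (𝓝 (2*mc*(N:ℝ)*t/(1-mc))) := by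
  apply Tendsto.div
  · exact (((tendsto_const_nhds (x := (2:ℝ))).mul fde_id_tendsto).mul tendsto_const_nhds).mul
      tendsto_const_nhds
  · exact (tendsto_const_nhds (x := (1:ℝ))).sub fde_id_tendsto
  · exact fde_one_sub_ne hN hmc

lemma fde_tk_tendsto {t : ℝ} (hN : 3 ≤ N) (hmc : mc = ((N:ℝ)-2)/N) :
    Tendsto (fun m : ℝ => t / fdeK N m) (𝓝[>] mc) (𝓝 0) := by
  have h : Tendsto (fun m : ℝ => (2*m*(N:ℝ)*t/(1-m)) * (m - mc)) (𝓝[>] mc) (𝓝 0) := by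
    have := (fde_c_tendsto (t := t) hN hmc).mul
      (fde_s_tendsto.mono_right nhdsWithin_le_nhds)
    simpa using this
  refine h.congr' ?_
  filter_upwards [fde_ev_lt_one hN hmc] with m hm
  exact (fde_t_div_K hN hmc hm.1 hm.2).symm

lemma fde_tail_tendsto (N : ℕ) (hN : 3 ≤ N) {mc : ℝ} (hmc : mc = ((N:ℝ)-2)/N)
    (M t : ℝ) (hM : 0 < M) (ht : 0 < t)
    (C : ℝ → ℝ) (hCpos : ∀ m, mc < m → m < 1 → 0 < C m)
    (hmass : ∀ m, mc < m → m < 1 → ∫ x, fdeBarenblatt N m (C m) x t = M)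
    {δ : ℝ} (hδ : 0 < δ) :
    Tendsto (fun m => ∫ x : EuclideanSpace ℝ (Fin N) in {x | δ ≤ ‖x‖},
      fdeBarenblatt N m (C m) x t) (𝓝[>] mc) (𝓝 0) := by
  have hN3 := fde_N3 hN
  have hN0 : (N:ℝ) ≠ 0 := by linarith
  have hmcp := fde_mc_pos hN hmc
  have hmc1 := fde_mc_lt_one hN hmc
  set cN : ℝ := (N : ℝ) * (volume (Metric.ball (0:EuclideanSpace ℝ (Fin N)) 1)).toReal with hcN
  have hS : MeasurableSet {x : EuclideanSpace ℝ (Fin N) | δ ≤ ‖x‖} :=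
    (isClosed_le continuous_const continuous_norm).measurableSet
  -- the eventual upper bound and its limit
  have hΨ0 : Tendsto (fun m : ℝ => ((2*m*(N:ℝ)*t/(1-m)) ^ (1/(1-m)) *
      (cN * δ ^ ((N:ℝ) - 2*(1/(1-m))) * ((1-m)/(N:ℝ)))) * (m - mc) ^ (1/(1-m) - 1))
      (𝓝[>] mc) (𝓝 0) := by
    have hc₀ : (0:ℝ) < 2*mc*(N:ℝ)*t/(1-mc) := by
      apply div_pos
      · have : (0:ℝ) < (N:ℝ) := by linarith
        positivity
      · linarith
    have h1 : Tendsto (fun m : ℝ => (2*m*(N:ℝ)*t/(1-m)) ^ (1/(1-m))) (𝓝[>] mc)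
        (𝓝 ((2*mc*(N:ℝ)*t/(1-mc)) ^ ((N:ℝ)/2))) :=
      (fde_c_tendsto hN hmc).rpow (fde_p_tendsto hN hmc) (Or.inl hc₀.ne')
    have he : Tendsto (fun m : ℝ => (N:ℝ) - 2*(1/(1-m))) (𝓝[>] mc)
        (𝓝 ((N:ℝ) - 2*((N:ℝ)/2))) :=
      tendsto_const_nhds.sub (tendsto_const_nhds.mul (fde_p_tendsto hN hmc))
    have h2 : Tendsto (fun m : ℝ => δ ^ ((N:ℝ) - 2*(1/(1-m)))) (𝓝[>] mc) (𝓝 1) := by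
      have h2' := (tendsto_const_nhds (x := δ)).rpow he (Or.inl hδ.ne')
      rwa [show (N:ℝ) - 2*((N:ℝ)/2) = 0 by ring, Real.rpow_zero] at h2'
    have h3 : Tendsto (fun m : ℝ => (1-m)/(N:ℝ)) (𝓝[>] mc) (𝓝 ((1-mc)/(N:ℝ))) :=
      (tendsto_const_nhds.sub fde_id_tendsto).div_const _
    have h4 : Tendsto (fun m : ℝ => (m - mc) ^ (1/(1-m) - 1)) (𝓝[>] mc) (𝓝 0) := by
      have h4' := (fde_s_tendsto.mono_right nhdsWithin_le_nhds).rpow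
        ((fde_p_tendsto hN hmc).sub (tendsto_const_nhds (x := (1:ℝ))))
        (Or.inr (by linarith))
      rwa [Real.zero_rpow (by linarith)] at h4'
    have := (h1.mul ((tendsto_const_nhds (x := cN)).mul h2 |>.mul h3)).mul h4
    simpa using this
  refine squeeze_zero' ?_ ?_ hΨ0
  · filter_upwards [fde_ev_lt_one hN hmc] with m hm
    exact setIntegral_nonneg hS fun x _ =>
      fde_nonneg hN hmc hm.1 hm.2 (hCpos _ hm.1 hm.2).le ht x
  · filter_upwards [fde_ev_lt_one hN hmc] with m hm
    obtain ⟨hm1, hm2⟩ := hm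
    have h1m : 0 < 1 - m := by linarith
    have hm0 : 0 < m := lt_trans hmcp hm1
    have hs : 0 < m - mc := by linarith
    have hd := fde_d_pos hN hmc hm1
    have hk := fdeK_pos hN hmc hm1 hm2
    have hp' : (N:ℝ) < 2*(1/(1-m)) := by
      rw [mul_one_div, lt_div_iff₀ h1m]
      nlinarith
    have hBint := fde_integrable hM (hmass m hm1 hm2)
    have step1 : ∫ x : EuclideanSpace ℝ (Fin N) in {x | δ ≤ ‖x‖},
        fdeBarenblatt N m (C m) x t ≤
        ∫ x : EuclideanSpace ℝ (Fin N) in {x | δ ≤ ‖x‖},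
          (t / fdeK N m) ^ (1/(1-m)) * ‖x‖ ^ (-(2*(1/(1-m)))) := by
      refine setIntegral_mono_on hBint.integrableOn
        ((fde_tail_integrableOn hN hδ hp').const_mul ((t / fdeK N m) ^ (1/(1-m)))) hS ?_
      intro x hxS
      have hxn : 0 < ‖x‖ := lt_of_lt_of_le hδ hxS
      have hx0 : x ≠ 0 := norm_pos_iff.mp hxn
      refine (fde_pointwise_bound hN hmc hm1 hm2 (hCpos m hm1 hm2) ht hx0).trans_eq ?_
      congr 1
      rw [← Real.rpow_natCast ‖x‖ 2, ← Real.rpow_mul (norm_nonneg x)]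
      congr 1
      push_cast
      ring
    refine step1.trans ?_
    rw [integral_const_mul, fde_tail_integral_eq hN hδ hp', ← hcN]
    -- now pure algebra
    rw [fde_t_div_K hN hmc hm1 hm2,
      Real.mul_rpow (by positivity) hs.le,
      Real.rpow_sub hs, Real.rpow_one]
    have e4 : 2*(1/(1-m)) - (N:ℝ) = (N:ℝ)*(m-mc)/(1-m) := by
      rw [eq_div_iff (ne_of_gt h1m), ← fde_d_eq hN hmc]
      field_simp
    rw [e4]
    apply le_of_eq
    field_simp

end helpers

/-- Disappearance of the fundamental solution of the fast diffusion equation at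
the critical exponent `m_c = (N-2)/N`, `N ≥ 3`: if the Barenblatt solutions
`B_m(·,t)` all have mass `M`, then as `m → m_c⁺` they converge to `0` pointwise
away from the origin and, in the weak-* sense against bounded continuous
functions, to the Dirac mass `M δ₀`. -/
theorem fde_barenblatt_to_dirac (N : ℕ) (hN : 3 ≤ N)
    (mc : ℝ) (hmc : mc = ((N : ℝ) - 2) / N)
    (M t : ℝ) (hM : 0 < M) (ht : 0 < t)
    (C : ℝ → ℝ) (hCpos : ∀ m, mc < m → m < 1 → 0 < C m)
    (hmass : ∀ m, mc < m → m < 1 →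
      ∫ x, fdeBarenblatt N m (C m) x t = M) :
    (∀ x : EuclideanSpace ℝ (Fin N), x ≠ 0 →
      Tendsto (fun m => fdeBarenblatt N m (C m) x t) (𝓝[>] mc) (𝓝 0)) ∧
    (∀ f : EuclideanSpace ℝ (Fin N) → ℝ, Continuous f → (∃ K, ∀ x, |f x| ≤ K) →
      Tendsto (fun m => ∫ x, f x * fdeBarenblatt N m (C m) x t)
        (𝓝[>] mc) (𝓝 (M * f 0))) := by
  have hN3 := fde_N3 hN
  constructor
  · -- pointwise convergence away from the origin
    intro x hx
    have hxp : (0:ℝ) < ‖x‖^2 := by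
      have : 0 < ‖x‖ := norm_pos_iff.mpr hx
      positivity
    have hG : Tendsto (fun m => (t / fdeK N m) ^ (1/(1-m)) * (‖x‖^2) ^ (-(1/(1-m))))
        (𝓝[>] mc) (𝓝 0) := by
      have h1 := (fde_tk_tendsto (t := t) hN hmc).rpow (fde_p_tendsto hN hmc)
        (Or.inr (by linarith))
      rw [Real.zero_rpow (by linarith)] at h1
      have h2 := (tendsto_const_nhds (x := ‖x‖^2)).rpow
        (fde_p_tendsto hN hmc).neg (Or.inl (ne_of_gt hxp))
      simpa using h1.mul h2
    refine squeeze_zero' ?_ ?_ hG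
    · filter_upwards [fde_ev_lt_one hN hmc] with m hm
      exact fde_nonneg hN hmc hm.1 hm.2 (hCpos _ hm.1 hm.2).le ht x
    · filter_upwards [fde_ev_lt_one hN hmc] with m hm
      exact fde_pointwise_bound hN hmc hm.1 hm.2 (hCpos _ hm.1 hm.2) ht hx
  · -- weak-* convergence to the Dirac mass
    rintro f hf ⟨K, hK⟩
    have hK0 : 0 ≤ K := le_trans (abs_nonneg _) (hK 0)
    rw [Metric.tendsto_nhds]
    intro ε hε
    obtain ⟨δ, hδpos, hδ⟩ := Metric.continuousAt_iff.mp (hf.continuousAt (x := 0)) (ε/(2*M))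
      (by positivity)
    set L : ℝ := K + |f 0| + 1 with hL
    have hL0 : 0 < L := by positivity
    have htail := fde_tail_tendsto N hN hmc M t hM ht C hCpos hmass hδpos
    have hsm : ∀ᶠ m in 𝓝[>] mc,
        (∫ x : EuclideanSpace ℝ (Fin N) in {x | δ ≤ ‖x‖}, fdeBarenblatt N m (C m) x t)
          < ε/(2*L) :=
      htail.eventually_lt_const (by positivity)
    filter_upwards [fde_ev_lt_one hN hmc, hsm] with m hm hsmall
    obtain ⟨hm1, hm2⟩ := hm
    have hBint := fde_integrable hM (hmass m hm1 hm2)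
    have hBnn : ∀ x, 0 ≤ fdeBarenblatt N m (C m) x t :=
      fun x => fde_nonneg hN hmc hm1 hm2 (hCpos m hm1 hm2).le ht x
    have hMass := hmass m hm1 hm2
    have hfBint : Integrable (fun x => f x * fdeBarenblatt N m (C m) x t) := by
      refine (hBint.const_mul K).mono' (hf.aestronglyMeasurable.mul hBint.1) ?_
      refine Eventually.of_forall fun x => ?_
      rw [norm_mul, Real.norm_eq_abs, Real.norm_eq_abs, abs_of_nonneg (hBnn x)]
      exact mul_le_mul_of_nonneg_right (hK x) (hBnn x)
    have habs_le : ∀ x, |f x - f 0| ≤ L := by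
      intro x
      calc |f x - f 0| ≤ |f x| + |f 0| := abs_sub _ _
      _ ≤ K + |f 0| := by linarith [hK x]
      _ ≤ L := by rw [hL]; linarith
    have hgBint : Integrable (fun x => |f x - f 0| * fdeBarenblatt N m (C m) x t) := by
      refine (hBint.const_mul L).mono'
        (((hf.sub continuous_const).abs.aestronglyMeasurable).mul hBint.1) ?_
      refine Eventually.of_forall fun x => ?_
      rw [Real.norm_eq_abs, abs_of_nonneg (mul_nonneg (abs_nonneg _) (hBnn x))]
      exact mul_le_mul_of_nonneg_right (habs_le x) (hBnn x)
    have hi : (∫ x, f x * fdeBarenblatt N m (C m) x t) - M * f 0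
        = ∫ x, (f x - f 0) * fdeBarenblatt N m (C m) x t := by
      rw [show (fun x => (f x - f 0) * fdeBarenblatt N m (C m) x t)
          = fun x => f x * fdeBarenblatt N m (C m) x t
              - f 0 * fdeBarenblatt N m (C m) x t from funext fun x => by ring]
      rw [integral_sub hfBint (hBint.const_mul (f 0)), integral_const_mul, hMass]
      ring
    rw [Real.dist_eq, hi]
    have habs : |∫ x, (f x - f 0) * fdeBarenblatt N m (C m) x t|
        ≤ ∫ x, |f x - f 0| * fdeBarenblatt N m (C m) x t := by
      have hni := norm_integral_le_integral_norm
        (fun x => (f x - f 0) * fdeBarenblatt N m (C m) x t) (μ := volume)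
      rw [Real.norm_eq_abs] at hni
      refine hni.trans (le_of_eq (integral_congr_ae (Eventually.of_forall fun x => ?_)))
      simp [norm_mul, Real.norm_eq_abs, abs_of_nonneg (hBnn x)]
    have hS : MeasurableSet {x : EuclideanSpace ℝ (Fin N) | δ ≤ ‖x‖} :=
      (isClosed_le continuous_const continuous_norm).measurableSet
    have hsplit : (∫ x, |f x - f 0| * fdeBarenblatt N m (C m) x t)
        = (∫ x in {x : EuclideanSpace ℝ (Fin N) | δ ≤ ‖x‖},
            |f x - f 0| * fdeBarenblatt N m (C m) x t)
          + ∫ x in {x : EuclideanSpace ℝ (Fin N) | δ ≤ ‖x‖}ᶜ,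
            |f x - f 0| * fdeBarenblatt N m (C m) x t :=
      (integral_add_compl hS hgBint).symm
    have hbound1 : (∫ x in {x : EuclideanSpace ℝ (Fin N) | δ ≤ ‖x‖},
        |f x - f 0| * fdeBarenblatt N m (C m) x t) < ε/2 := by
      have h1 : (∫ x in {x : EuclideanSpace ℝ (Fin N) | δ ≤ ‖x‖},
          |f x - f 0| * fdeBarenblatt N m (C m) x t)
          ≤ ∫ x in {x : EuclideanSpace ℝ (Fin N) | δ ≤ ‖x‖},
            L * fdeBarenblatt N m (C m) x t := by
        refine setIntegral_mono_on hgBint.integrableOn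
          ((hBint.const_mul L).integrableOn) hS fun x _ =>
          mul_le_mul_of_nonneg_right (habs_le x) (hBnn x)
      rw [integral_const_mul] at h1
      have h2 : L * (∫ x in {x : EuclideanSpace ℝ (Fin N) | δ ≤ ‖x‖},
          fdeBarenblatt N m (C m) x t) < L * (ε/(2*L)) :=
        (mul_lt_mul_iff_right₀ hL0).mpr hsmall
      have h3 : L * (ε/(2*L)) = ε/2 := by field_simp
      rw [h3] at h2
      exact h1.trans_lt h2
    have hbound2 : (∫ x in {x : EuclideanSpace ℝ (Fin N) | δ ≤ ‖x‖}ᶜ,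
        |f x - f 0| * fdeBarenblatt N m (C m) x t) ≤ ε/2 := by
      have h1 : (∫ x in {x : EuclideanSpace ℝ (Fin N) | δ ≤ ‖x‖}ᶜ,
          |f x - f 0| * fdeBarenblatt N m (C m) x t)
          ≤ ∫ x in {x : EuclideanSpace ℝ (Fin N) | δ ≤ ‖x‖}ᶜ,
            (ε/(2*M)) * fdeBarenblatt N m (C m) x t := by
        refine setIntegral_mono_on hgBint.integrableOn
          ((hBint.const_mul (ε/(2*M))).integrableOn) hS.compl fun x hx => ?_
        have hxδ : ‖x‖ < δ := by
          have hx' : ¬ δ ≤ ‖x‖ := hx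
          exact not_le.mp hx'
        have hfx : |f x - f 0| < ε/(2*M) := by
          have := hδ (show dist x 0 < δ by rwa [dist_zero_right])
          rwa [Real.dist_eq] at this
        exact mul_le_mul_of_nonneg_right hfx.le (hBnn x)
      rw [integral_const_mul] at h1
      have h2 : (∫ x in {x : EuclideanSpace ℝ (Fin N) | δ ≤ ‖x‖}ᶜ,
          fdeBarenblatt N m (C m) x t) ≤ M := by
        rw [← hMass]
        exact setIntegral_le_integral hBint (Eventually.of_forall hBnn)
      have h3 : (ε/(2*M)) * M = ε/2 := by field_simp
      have h4 : (ε/(2*M)) * (∫ x in {x : EuclideanSpace ℝ (Fin N) | δ ≤ ‖x‖}ᶜ,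
          fdeBarenblatt N m (C m) x t) ≤ (ε/(2*M)) * M :=
        mul_le_mul_of_nonneg_left h2 (by positivity)
      linarith
    calc |∫ x, (f x - f 0) * fdeBarenblatt N m (C m) x t|
        ≤ ∫ x, |f x - f 0| * fdeBarenblatt N m (C m) x t := habs
      _ < ε := by rw [hsplit]; linarith
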